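/- Fix a boundary condition τ ∈ {−1,1}^{Z^d} and let μ be any weak limit point of the finite-volume stationary measures ν_Λ^τ (extended to {−1,1}^{Z^d} by τ outside Λ) as Λ ↑ Z^d. Then μ is reversible for the infinite-volume PCA P, i.e. for every function f : {−1,1}^{Z^d} × {−1,1}^{Z^d} → ℝ which is local in both variables, ∫∫ f(σ,η) P(dσ|η) μ(dη) = ∫∫ f(σ,η) P(dη|σ) μ(dσ). -/

import Mathlib

open MeasureTheory Filter

namespace PCA

noncomputable section

/-- Sites of the lattice `ℤ^d`. -/
abbrev Site (d : ℕ) := Fin d → ℤ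

/-- Spin configurations on `ℤ^d` with spins in `{-1,1}` encoded by `Bool`. -/
abbrev Conf (d : ℕ) := Site d → Bool

/-- The real value of a spin: `true ↦ 1`, `false ↦ -1`. -/
def val (b : Bool) : ℝ := if b then 1 else -1

/-- Squared Euclidean norm of a site. -/
def normSq {d : ℕ} (i : Site d) : ℤ := ∑ t, (i t) ^ 2

/-- The local field `Σ_j k(i-j) η_j`. -/
def field {d : ℕ} (k : Site d → ℝ) (i : Site d) (η : Conf d) : ℝ :=
  ∑' j : Site d, k (i - j) * val (η j)

/-- Single site updating probability
`p_i(s|η) = (1 + s tanh(β Σ_j k(i-j) η_j + β h))/2`. -/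
def pval {d : ℕ} (β h : ℝ) (k : Site d → ℝ) (i : Site d) (s : Bool) (η : Conf d) : ℝ :=
  (1 + val s * Real.tanh (β * field k i η + β * h)) / 2

/-- The configuration equal to `a` on `Λ` and to `τ` outside `Λ`. -/
def fill {d : ℕ} (Λ : Finset (Site d)) (a : ↥Λ → Bool) (τ : Conf d) : Conf d :=
  fun j => if h : j ∈ Λ then a ⟨j, h⟩ else τ j

/-- Finite volume PCA transition probability with boundary condition `τ`:
`P_Λ^τ(σ|η) = ∏_{i ∈ Λ} p_i(σ_i | η_Λ τ_{Λ^c})`. -/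
def Pfin {d : ℕ} (β h : ℝ) (k : Site d → ℝ) (Λ : Finset (Site d)) (τ : Conf d)
    (σ η : ↥Λ → Bool) : ℝ :=
  ∏ i : ↥Λ, pval β h k i.1 (σ i) (fill Λ η τ)

/-- The boundary field `Σ_{j ∈ Λ^c} k(i-j) τ_j`. -/
def outField {d : ℕ} (k : Site d → ℝ) (Λ : Finset (Site d)) (τ : Conf d) (i : Site d) : ℝ :=
  ∑' j : Site d, if j ∈ Λ then 0 else k (i - j) * val (τ j)

/-- Unnormalized stationary measure of the finite volume PCA:
`∏_{i∈Λ} e^{βhσ_i} cosh(β Σ_j k(i-j) σ̃_j + βh) e^{β σ_i Σ_{j∈Λ^c} k(i-j) τ_j}`. -/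
def nuNum {d : ℕ} (β h : ℝ) (k : Site d → ℝ) (Λ : Finset (Site d)) (τ : Conf d)
    (σ : ↥Λ → Bool) : ℝ :=
  ∏ i : ↥Λ,
    Real.exp (β * h * val (σ i))
      * Real.cosh (β * field k i.1 (fill Λ σ τ) + β * h)
      * Real.exp (β * val (σ i) * outField k Λ τ i.1)

/-- The normalized stationary measure `ν_Λ^τ`. -/
def nu {d : ℕ} (β h : ℝ) (k : Site d → ℝ) (Λ : Finset (Site d)) (τ : Conf d)
    (σ : ↥Λ → Bool) : ℝ :=
  nuNum β h k Λ τ σ / ∑ σ' : ↥Λ → Bool, nuNum β h k Λ τ σ'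


/-- The cylinder set of configurations agreeing with `a` on `Λ`. -/
def cylB {d : ℕ} (Λ : Finset (Site d)) (a : ↥Λ → Bool) : Set (Conf d) :=
  {σ : Conf d | ∀ j : ↥Λ, σ j.1 = a j}

/-- `P` is the (infinite volume) PCA kernel with single site probabilities `pval β h k`:
on every cylinder, `P(·|η)` is the product of the single site probabilities. -/
def IsPCAB {d : ℕ} (β h : ℝ) (k : Site d → ℝ)
    (P : ProbabilityTheory.Kernel (Conf d) (Conf d)) : Prop :=
  ∀ (η : Conf d) (Λ : Finset (Site d)) (a : ↥Λ → Bool),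
    P η (cylB Λ a) = ∏ j : ↥Λ, ENNReal.ofReal (pval β h k j.1 (a j) η)

/-- The Hamiltonian `H_Λ^τ(a) = Σ_{A ∩ Λ ≠ ∅} Φ_A(a_Λ τ_{Λ^c})` for the potential
`Φ_{{i}}(σ) = -βhσ_i`, `Φ_{U_i}(σ) = -log cosh(β Σ_j k(i-j)σ_j + βh)`,
`U_i = {j : k(i-j) ≠ 0}`, and `Φ_A = 0` otherwise. -/
def hamB {d : ℕ} (β h : ℝ) (k : Site d → ℝ) (Λ : Finset (Site d)) (a : ↥Λ → Bool)
    (τ : Conf d) : ℝ :=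
  (∑ i : ↥Λ, -(β * h * val (a i))) +
    ∑' i : Site d,
      Set.indicator {i : Site d | ∃ j ∈ Λ, k (i - j) ≠ 0}
        (fun i => -Real.log (Real.cosh (β * field k i (fill Λ a τ) + β * h))) i

/-- The finite volume Gibbs weight `μ_Λ^τ(a) = exp(-H_Λ^τ(a))/Z_Λ^τ`. -/
def gibbsWB {d : ℕ} (β h : ℝ) (k : Site d → ℝ) (Λ : Finset (Site d)) (a : ↥Λ → Bool)
    (τ : Conf d) : ℝ :=
  Real.exp (-hamB β h k Λ a τ) / ∑ b : ↥Λ → Bool, Real.exp (-hamB β h k Λ b τ)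

/-- The σ-algebra generated by the spins outside `Λ`. -/
def outer {d : ℕ} (Λ : Finset (Site d)) : MeasurableSpace (Conf d) :=
  MeasurableSpace.comap (fun σ (j : {j : Site d // j ∉ Λ}) => σ j.1) MeasurableSpace.pi

/-- `μ` is a Gibbs measure for the potential associated to `β`, `h`, `k` (DLR equations):
for every finite `Λ`, conditionally on the configuration outside `Λ`, the configuration
on `Λ` is distributed according to the finite volume Gibbs measure. -/
def IsGibbsB {d : ℕ} (β h : ℝ) (k : Site d → ℝ) (μ : Measure (Conf d)) : Prop :=
  ∀ (Λ : Finset (Site d)) (a : ↥Λ → Bool) (B : Set (Conf d)),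
    MeasurableSet[outer Λ] B →
    μ (cylB Λ a ∩ B) = ∫⁻ τ in B, ENNReal.ofReal (gibbsWB β h k Λ a τ) ∂μ

/-- The centered hypercube `[-n,n]^d ∩ ℤ^d`. -/
def boxCc {d : ℕ} (n : ℕ) : Finset (Site d) :=
  Fintype.piFinset fun _ => Finset.Icc (-(n : ℤ)) (n : ℤ)

/-- A local function on configuration space: it depends on finitely many spins. -/
def LocalFun {d : ℕ} (f : Conf d → ℝ) : Prop :=
  ∃ Δ : Finset (Site d), ∀ σ σ' : Conf d, (∀ j ∈ Δ, σ j = σ' j) → f σ = f σ'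

/-- The finite volume stationary measure `ν_Λ^τ` viewed as a probability measure on the
whole configuration space, extending configurations by `τ` outside `Λ`. -/
def nuMeas {d : ℕ} (β h : ℝ) (k : Site d → ℝ) (Λ : Finset (Site d)) (τ : Conf d) :
    Measure (Conf d) :=
  ∑ a : ↥Λ → Bool, ENNReal.ofReal (nu β h k Λ τ a) • Measure.dirac (fill Λ a τ)


/-! ### Auxiliary lemmas -/

section Aux

variable {d : ℕ}

/-- A finite set containing the support of `j ↦ k (i - j)`. -/
def suppK (R : ℝ) (i : Site d) : Finset (Site d) :=
  (boxCc ⌈R⌉₊ : Finset (Site d)).image (fun v => i - v)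

lemma k_zero (R : ℝ) (k : Site d → ℝ) (hR : 0 < R)
    (hrange : ∀ i : Site d, R ^ 2 < (normSq i : ℝ) → k i = 0)
    {i j : Site d} (hj : j ∉ suppK R i) : k (i - j) = 0 := by
  apply hrange
  by_contra hle
  push_neg at hle
  apply hj
  simp only [suppK, Finset.mem_image]
  refine ⟨i - j, ?_, by abel⟩
  simp only [boxCc, Fintype.mem_piFinset, Finset.mem_Icc]
  intro t
  have h0 : ((i - j) t) ^ 2 ≤ normSq (i - j) := by
    unfold normSq
    exact Finset.single_le_sum (f := fun s => ((i - j) s) ^ 2)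
      (fun s _ => sq_nonneg _) (Finset.mem_univ t)
  have h1 : (((i - j) t : ℤ) : ℝ) ^ 2 ≤ R ^ 2 := by
    calc (((i - j) t : ℤ) : ℝ) ^ 2 = ((((i - j) t) ^ 2 : ℤ) : ℝ) := by push_cast; ring
      _ ≤ (normSq (i - j) : ℝ) := by exact_mod_cast h0
      _ ≤ R ^ 2 := hle
  have hM : R ≤ (⌈R⌉₊ : ℝ) := Nat.le_ceil R
  have hM0 : (0:ℝ) ≤ (⌈R⌉₊ : ℝ) := le_trans hR.le hM
  have h2 : (((i - j) t : ℤ) : ℝ) ^ 2 ≤ ((⌈R⌉₊ : ℕ) : ℝ) ^ 2 := by nlinarith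
  have h3 : -((⌈R⌉₊ : ℝ)) ≤ (((i - j) t : ℤ) : ℝ) := by
    nlinarith [sq_nonneg ((((i - j) t : ℤ) : ℝ) + (⌈R⌉₊ : ℝ))]
  have h4 : (((i - j) t : ℤ) : ℝ) ≤ (⌈R⌉₊ : ℝ) := by
    nlinarith [sq_nonneg ((((i - j) t : ℤ) : ℝ) - (⌈R⌉₊ : ℝ))]
  constructor
  · exact_mod_cast h3
  · exact_mod_cast h4

lemma field_eq_sum (R : ℝ) (k : Site d → ℝ) (hR : 0 < R)
    (hrange : ∀ i : Site d, R ^ 2 < (normSq i : ℝ) → k i = 0)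
    (i : Site d) (η : Conf d) :
    field k i η = ∑ j ∈ suppK R i, k (i - j) * val (η j) :=
  tsum_eq_sum (fun j hj => by rw [k_zero R k hR hrange hj, zero_mul])

lemma field_local (R : ℝ) (k : Site d → ℝ) (hR : 0 < R)
    (hrange : ∀ i : Site d, R ^ 2 < (normSq i : ℝ) → k i = 0)
    (i : Site d) {η η' : Conf d} (hagree : ∀ j ∈ suppK R i, η j = η' j) :
    field k i η = field k i η' := by
  rw [field_eq_sum R k hR hrange, field_eq_sum R k hR hrange]
  exact Finset.sum_congr rfl fun j hj => by rw [hagree j hj]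

lemma field_fill (R : ℝ) (k : Site d → ℝ) (hR : 0 < R)
    (hrange : ∀ i : Site d, R ^ 2 < (normSq i : ℝ) → k i = 0)
    (Λ : Finset (Site d)) (a : ↥Λ → Bool) (τ : Conf d) (i : Site d) :
    field k i (fill Λ a τ)
      = (∑ j : ↥Λ, k (i - j.1) * val (a j)) + outField k Λ τ i := by
  have hpt : ∀ j : Site d, k (i - j) * val (fill Λ a τ j) =
      (if hj : j ∈ Λ then k (i - j) * val (a ⟨j, hj⟩) else 0)
        + (if j ∈ Λ then 0 else k (i - j) * val (τ j)) := by
    intro j; by_cases hj : j ∈ Λ <;> simp [fill, hj]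
  have hs1 : Summable (fun j : Site d =>
      if hj : j ∈ Λ then k (i - j) * val (a ⟨j, hj⟩) else 0) :=
    summable_of_ne_finset_zero (s := Λ) (fun j hj => dif_neg hj)
  have hs2 : Summable (fun j : Site d =>
      if j ∈ Λ then 0 else k (i - j) * val (τ j)) := by
    refine summable_of_ne_finset_zero (s := suppK R i) (fun j hj => ?_)
    by_cases hjΛ : j ∈ Λ
    · simp [hjΛ]
    · simp [hjΛ, k_zero R k hR hrange hj]
  unfold field
  calc ∑' j, k (i - j) * val (fill Λ a τ j)
      = ∑' j, ((if hj : j ∈ Λ then k (i - j) * val (a ⟨j, hj⟩) else 0)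
          + (if j ∈ Λ then 0 else k (i - j) * val (τ j))) := tsum_congr hpt
    _ = (∑' j, if hj : j ∈ Λ then k (i - j) * val (a ⟨j, hj⟩) else 0)
          + ∑' j, (if j ∈ Λ then 0 else k (i - j) * val (τ j)) := Summable.tsum_add hs1 hs2
    _ = (∑ j : ↥Λ, k (i - j.1) * val (a j)) + outField k Λ τ i := by
        congr 1
        rw [tsum_eq_sum (s := Λ) (fun j hj => dif_neg hj)]
        rw [← Finset.sum_attach Λ
          (fun j => if hj : j ∈ Λ then k (i - j) * val (a ⟨j, hj⟩) else 0)]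
        rw [Finset.univ_eq_attach]
        exact Finset.sum_congr rfl fun x _ => by rw [dif_pos x.2]

lemma pval_eq_exp (β h : ℝ) (k : Site d → ℝ) (i : Site d) (s : Bool) (η : Conf d) :
    pval β h k i s η = Real.exp (val s * (β * field k i η + β * h))
      / (2 * Real.cosh (β * field k i η + β * h)) := by
  have key_pos : ∀ x : ℝ, (1 + Real.tanh x) / 2 = Real.exp x / (2 * Real.cosh x) := by
    intro x
    have hc : Real.cosh x ≠ 0 := (Real.cosh_pos x).ne'
    rw [Real.tanh_eq_sinh_div_cosh, ← Real.cosh_add_sinh]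
    field_simp
  have key_neg : ∀ x : ℝ, (1 + -1 * Real.tanh x) / 2 = Real.exp (-x) / (2 * Real.cosh x) := by
    intro x
    have hc : Real.cosh x ≠ 0 := (Real.cosh_pos x).ne'
    rw [Real.tanh_eq_sinh_div_cosh, ← Real.cosh_sub_sinh]
    field_simp
    ring
  unfold pval
  cases s
  · rw [show val false = (-1 : ℝ) from rfl, key_neg, neg_one_mul]
  · rw [show val true = (1 : ℝ) from rfl, one_mul, key_pos, one_mul]

lemma pval_nonneg (β h : ℝ) (k : Site d → ℝ) (i : Site d) (s : Bool) (η : Conf d) :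
    0 ≤ pval β h k i s η := by
  rw [pval_eq_exp]
  positivity

lemma pval_add_one (β h : ℝ) (k : Site d → ℝ) (i : Site d) (η : Conf d) :
    pval β h k i true η + pval β h k i false η = 1 := by
  unfold pval
  rw [show val true = (1 : ℝ) from rfl, show val false = (-1 : ℝ) from rfl]
  ring

lemma pval_local (β h R : ℝ) (k : Site d → ℝ) (hR : 0 < R)
    (hrange : ∀ i : Site d, R ^ 2 < (normSq i : ℝ) → k i = 0)
    (i : Site d) (s : Bool) {η η' : Conf d} (hagree : ∀ j ∈ suppK R i, η j = η' j) :
    pval β h k i s η = pval β h k i s η' := by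
  unfold pval
  rw [field_local R k hR hrange i hagree]

lemma nuNum_pos (β h : ℝ) (k : Site d → ℝ) (Λ : Finset (Site d)) (τ : Conf d)
    (σ : ↥Λ → Bool) : 0 < nuNum β h k Λ τ σ := by
  refine Finset.prod_pos fun i _ => ?_
  have := Real.cosh_pos (β * field k i.1 (fill Λ σ τ) + β * h)
  positivity

lemma nu_nonneg (β h : ℝ) (k : Site d → ℝ) (Λ : Finset (Site d)) (τ : Conf d)
    (σ : ↥Λ → Bool) : 0 ≤ nu β h k Λ τ σ := by
  unfold nu
  have hZ : 0 < ∑ σ' : ↥Λ → Bool, nuNum β h k Λ τ σ' :=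
    Finset.sum_pos (fun σ' _ => nuNum_pos β h k Λ τ σ') Finset.univ_nonempty
  exact le_of_lt (div_pos (nuNum_pos β h k Λ τ σ) hZ)

lemma nuNum_mul_Pfin (β h R : ℝ) (k : Site d → ℝ)
    (Λ : Finset (Site d)) (τ : Conf d) (a c : ↥Λ → Bool) :
    nuNum β h k Λ τ a * Pfin β h k Λ τ c a = (∏ _i : ↥Λ, (1:ℝ)/2) *
      Real.exp (∑ i : ↥Λ, (β * h * val (a i) + β * val (a i) * outField k Λ τ i.1
        + val (c i) * (β * field k i.1 (fill Λ a τ) + β * h))) := by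
  unfold nuNum Pfin
  rw [Real.exp_sum, ← Finset.prod_mul_distrib, ← Finset.prod_mul_distrib]
  refine Finset.prod_congr rfl fun i _ => ?_
  rw [pval_eq_exp]
  have hc : Real.cosh (β * field k i.1 (fill Λ a τ) + β * h) ≠ 0 :=
    (Real.cosh_pos _).ne'
  rw [Real.exp_add, Real.exp_add]
  field_simp

lemma sum_exponent_symm (β h R : ℝ) (k : Site d → ℝ) (hR : 0 < R)
    (hsym : ∀ i : Site d, k (-i) = k i)
    (hrange : ∀ i : Site d, R ^ 2 < (normSq i : ℝ) → k i = 0)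
    (Λ : Finset (Site d)) (τ : Conf d) (a c : ↥Λ → Bool) :
    (∑ i : ↥Λ, (β * h * val (a i) + β * val (a i) * outField k Λ τ i.1
        + val (c i) * (β * field k i.1 (fill Λ a τ) + β * h)))
      = ∑ i : ↥Λ, (β * h * val (c i) + β * val (c i) * outField k Λ τ i.1
        + val (a i) * (β * field k i.1 (fill Λ c τ) + β * h)) := by
  have hre : ∀ a c : ↥Λ → Bool,
      (∑ i : ↥Λ, (β * h * val (a i) + β * val (a i) * outField k Λ τ i.1
          + val (c i) * (β * field k i.1 (fill Λ a τ) + β * h)))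
        = (∑ i : ↥Λ, (β * h * val (a i) + β * h * val (c i)
            + β * val (a i) * outField k Λ τ i.1 + β * val (c i) * outField k Λ τ i.1))
          + β * ∑ i : ↥Λ, ∑ j : ↥Λ, val (c i) * (k (i.1 - j.1) * val (a j)) := by
    intro a c
    rw [Finset.mul_sum, ← Finset.sum_add_distrib]
    refine Finset.sum_congr rfl fun i _ => ?_
    rw [field_fill R k hR hrange, ← Finset.mul_sum, Finset.mul_sum]
    rw [show (∑ j : ↥Λ, val (c i) * (k (i.1 - j.1) * val (a j)))
        = val (c i) * ∑ j : ↥Λ, k (i.1 - j.1) * val (a j) from (Finset.mul_sum _ _ _).symm]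
    ring
  rw [hre a c, hre c a]
  congr 1
  · exact Finset.sum_congr rfl fun i _ => by ring
  · congr 1
    rw [Finset.sum_comm]
    refine Finset.sum_congr rfl fun i _ => Finset.sum_congr rfl fun j _ => ?_
    rw [show k ((j : Site d) - (i : Site d)) = k ((i : Site d) - (j : Site d)) from by
      rw [← hsym ((i : Site d) - (j : Site d)), neg_sub]]
    ring

lemma detailed_balance (β h R : ℝ) (k : Site d → ℝ) (hR : 0 < R)
    (hsym : ∀ i : Site d, k (-i) = k i)
    (hrange : ∀ i : Site d, R ^ 2 < (normSq i : ℝ) → k i = 0)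
    (Λ : Finset (Site d)) (τ : Conf d) (a c : ↥Λ → Bool) :
    nu β h k Λ τ a * Pfin β h k Λ τ c a = nu β h k Λ τ c * Pfin β h k Λ τ a c := by
  unfold nu
  rw [div_mul_eq_mul_div, div_mul_eq_mul_div,
    nuNum_mul_Pfin β h R k Λ τ a c, nuNum_mul_Pfin β h R k Λ τ c a,
    sum_exponent_symm β h R k hR hsym hrange Λ τ a c]

lemma measurable_restr (Δ : Finset (Site d)) :
    Measurable (fun η : Conf d => (fun j : ↥Δ => η j.1)) :=
  measurable_pi_lambda _ fun j => measurable_pi_apply j.1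

lemma localFun_stronglyMeasurable {f : Conf d → ℝ} (hf : LocalFun f) :
    StronglyMeasurable f := by
  obtain ⟨Δ, hΔ⟩ := hf
  have hfe : f = (fun x : ↥Δ → Bool => f (fill Δ x (fun _ => true)))
      ∘ (fun η (j : ↥Δ) => η j.1) := by
    funext η
    exact hΔ η (fill Δ (fun j : ↥Δ => η j.1) (fun _ => true))
      (fun j hj => by simp [fill, hj])
  rw [hfe]
  exact ((measurable_of_countable _).comp (measurable_restr Δ)).stronglyMeasurable

lemma integrable_dirac {f : Conf d → ℝ} (hf : StronglyMeasurable f) (x : Conf d) :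
    Integrable f (Measure.dirac x) :=
  ⟨hf.aestronglyMeasurable, by
    simp [HasFiniteIntegral, MeasureTheory.lintegral_dirac' _ hf.measurable.enorm]⟩

lemma integral_nuMeas (β h : ℝ) (k : Site d → ℝ) (Λ : Finset (Site d)) (τ : Conf d)
    (g : Conf d → ℝ) (hg : StronglyMeasurable g) :
    ∫ x, g x ∂(nuMeas β h k Λ τ)
      = ∑ a : ↥Λ → Bool, nu β h k Λ τ a * g (fill Λ a τ) := by
  unfold nuMeas
  rw [integral_finset_sum_measure
    (fun a _ => (integrable_dirac hg _).smul_measure ENNReal.ofReal_ne_top)]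
  refine Finset.sum_congr rfl fun a _ => ?_
  rw [integral_smul_measure, integral_dirac' _ _ hg,
    ENNReal.toReal_ofReal (nu_nonneg β h k Λ τ a), smul_eq_mul]

lemma measurableSet_cylB (Δ : Finset (Site d)) (a : ↥Δ → Bool) :
    MeasurableSet (cylB Δ a) := by
  have : cylB Δ a = (fun η : Conf d => (fun j : ↥Δ => η j.1)) ⁻¹' {a} := by
    ext σ
    simp [cylB, funext_iff]
  rw [this]
  exact measurable_restr Δ (measurableSet_singleton a)

lemma kernel_integral (β h : ℝ) (k : Site d → ℝ)
    (P : ProbabilityTheory.Kernel (Conf d) (Conf d)) [ProbabilityTheory.IsMarkovKernel P]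
    (hP : IsPCAB β h k P) (Δ : Finset (Site d)) (τ : Conf d)
    (F : Conf d → ℝ) (hF : ∀ σ σ' : Conf d, (∀ j ∈ Δ, σ j = σ' j) → F σ = F σ')
    (η : Conf d) :
    ∫ σ, F σ ∂(P η)
      = ∑ a : ↥Δ → Bool, F (fill Δ a τ) * ∏ j : ↥Δ, pval β h k j.1 (a j) η := by
  have hpt : ∀ σ : Conf d, F σ
      = ∑ a : ↥Δ → Bool, (cylB Δ a).indicator (fun _ => F (fill Δ a τ)) σ := by
    intro σ
    rw [Finset.sum_eq_single (fun j : ↥Δ => σ j.1)]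
    · have hmem : σ ∈ cylB Δ (fun j : ↥Δ => σ j.1) := fun j => rfl
      rw [Set.indicator_of_mem hmem]
      exact hF σ (fill Δ (fun j : ↥Δ => σ j.1) τ) (fun j hj => by simp [fill, hj])
    · intro b _ hb
      refine Set.indicator_of_notMem (fun hmem => hb ?_) _
      funext j
      exact (hmem j).symm
    · intro hmem
      exact absurd (Finset.mem_univ _) hmem
  calc ∫ σ, F σ ∂(P η)
      = ∫ σ, (∑ a : ↥Δ → Bool, (cylB Δ a).indicator (fun _ => F (fill Δ a τ)) σ) ∂(P η) :=
        integral_congr_ae (Filter.Eventually.of_forall hpt)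
    _ = ∑ a : ↥Δ → Bool, ∫ σ, (cylB Δ a).indicator (fun _ => F (fill Δ a τ)) σ ∂(P η) :=
        integral_finset_sum _
          (fun a _ => (integrable_const _).indicator (measurableSet_cylB Δ a))
    _ = ∑ a : ↥Δ → Bool, F (fill Δ a τ) * ∏ j : ↥Δ, pval β h k j.1 (a j) η := by
        refine Finset.sum_congr rfl fun a _ => ?_
        rw [integral_indicator_const _ (measurableSet_cylB Δ a), measureReal_def, hP η Δ a, smul_eq_mul,
          ENNReal.toReal_prod, mul_comm]
        congr 1
        exact Finset.prod_congr rfl fun j _ =>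
          ENNReal.toReal_ofReal (pval_nonneg β h k j.1 (a j) η)

lemma ext_sum (β h : ℝ) (k : Site d → ℝ) {Δ Λ : Finset (Site d)} (hsub : Δ ⊆ Λ)
    (b : ↥Δ → Bool) (η : Conf d) :
    (∏ j : ↥Δ, pval β h k j.1 (b j) η)
      = ∑ c : ↥Λ → Bool, (if (∀ j : ↥Δ, c ⟨j.1, hsub j.2⟩ = b j)
          then ∏ i : ↥Λ, pval β h k i.1 (c i) η else 0) := by
  classical
  set F : ↥Λ → Bool → ℝ := fun i s =>
    if hi : i.1 ∈ Δ then (if s = b ⟨i.1, hi⟩ then pval β h k i.1 s η else 0)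
    else pval β h k i.1 s η with hF
  have h1 : ∀ c : ↥Λ → Bool, (∏ i : ↥Λ, F i (c i))
      = if (∀ j : ↥Δ, c ⟨j.1, hsub j.2⟩ = b j)
        then ∏ i : ↥Λ, pval β h k i.1 (c i) η else 0 := by
    intro c
    by_cases hc : ∀ j : ↥Δ, c ⟨j.1, hsub j.2⟩ = b j
    · rw [if_pos hc]
      refine Finset.prod_congr rfl fun i _ => ?_
      by_cases hi : i.1 ∈ Δ
      · simp only [hF]
        rw [dif_pos hi, if_pos (show c i = b ⟨i.1, hi⟩ from hc ⟨i.1, hi⟩)]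
      · simp only [hF]
        rw [dif_neg hi]
    · rw [if_neg hc]
      push_neg at hc
      obtain ⟨j, hj⟩ := hc
      refine Finset.prod_eq_zero (Finset.mem_univ (⟨j.1, hsub j.2⟩ : ↥Λ)) ?_
      simp only [hF]
      rw [dif_pos j.2, if_neg hj]
  have h2 : ∀ i : ↥Λ, (∑ s : Bool, F i s)
      = if hi : i.1 ∈ Δ then pval β h k i.1 (b ⟨i.1, hi⟩) η else 1 := by
    intro i
    rw [Fintype.sum_bool]
    by_cases hi : i.1 ∈ Δ
    · simp only [hF]
      rw [dif_pos hi, dif_pos hi, dif_pos hi]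
      cases hb : b ⟨i.1, hi⟩
      · simp [hb]
      · simp [hb]
    · simp only [hF]
      rw [dif_neg hi, dif_neg hi, dif_neg hi]
      exact pval_add_one β h k i.1 η
  have h3 : (∏ i : ↥Λ, ∑ s : Bool, F i s) = ∑ c : ↥Λ → Bool, ∏ i : ↥Λ, F i (c i) := by
    rw [show (Finset.univ : Finset (↥Λ → Bool)) = Fintype.piFinset (fun _ => Finset.univ)
      from Fintype.piFinset_univ.symm]
    exact Finset.prod_univ_sum _ _
  have h4 : (∏ i : ↥Λ, ∑ s : Bool, F i s) = ∏ j : ↥Δ, pval β h k j.1 (b j) η := by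
    rw [Finset.prod_congr rfl (fun i _ => h2 i)]
    rw [show (∏ i : ↥Λ, if hi : i.1 ∈ Δ then pval β h k i.1 (b ⟨i.1, hi⟩) η else 1)
        = ∏ x ∈ Λ, (if hx : x ∈ Δ then pval β h k x (b ⟨x, hx⟩) η else 1) from
      Finset.prod_coe_sort Λ (fun x => if hx : x ∈ Δ then pval β h k x (b ⟨x, hx⟩) η else 1)]
    rw [← Finset.prod_subset hsub (fun x _ hx => dif_neg hx)]
    rw [← Finset.prod_coe_sort Δ (fun x => if hx : x ∈ Δ then pval β h k x (b ⟨x, hx⟩) η else 1)]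
    exact Finset.prod_congr rfl fun j _ => by rw [dif_pos j.2]
  rw [← h4, h3]
  exact Finset.sum_congr rfl fun c _ => h1 c

lemma expand_inner (β h : ℝ) (k : Site d → ℝ) {Δ Λ : Finset (Site d)} (hsub : Δ ⊆ Λ)
    (τ : Conf d) (η : Conf d) (G : Conf d → ℝ)
    (hG : ∀ σ σ' : Conf d, (∀ j ∈ Δ, σ j = σ' j) → G σ = G σ') :
    (∑ b : ↥Δ → Bool, G (fill Δ b τ) * ∏ j : ↥Δ, pval β h k j.1 (b j) η)
      = ∑ c : ↥Λ → Bool, G (fill Λ c τ) * ∏ i : ↥Λ, pval β h k i.1 (c i) η := by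
  classical
  calc (∑ b : ↥Δ → Bool, G (fill Δ b τ) * ∏ j : ↥Δ, pval β h k j.1 (b j) η)
      = ∑ b : ↥Δ → Bool, ∑ c : ↥Λ → Bool,
          (if (∀ j : ↥Δ, c ⟨j.1, hsub j.2⟩ = b j)
            then G (fill Δ b τ) * ∏ i : ↥Λ, pval β h k i.1 (c i) η else 0) := by
        refine Finset.sum_congr rfl fun b _ => ?_
        rw [ext_sum β h k hsub b η, Finset.mul_sum]
        exact Finset.sum_congr rfl fun c _ => by rw [mul_ite, mul_zero]
    _ = ∑ c : ↥Λ → Bool, ∑ b : ↥Δ → Bool,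
          (if (∀ j : ↥Δ, c ⟨j.1, hsub j.2⟩ = b j)
            then G (fill Δ b τ) * ∏ i : ↥Λ, pval β h k i.1 (c i) η else 0) :=
        Finset.sum_comm
    _ = ∑ c : ↥Λ → Bool, G (fill Δ (fun j : ↥Δ => c ⟨j.1, hsub j.2⟩) τ)
          * ∏ i : ↥Λ, pval β h k i.1 (c i) η := by
        refine Finset.sum_congr rfl fun c _ => ?_
        have hiff : ∀ b : ↥Δ → Bool,
            (∀ j : ↥Δ, c ⟨j.1, hsub j.2⟩ = b j) ↔ b = (fun j : ↥Δ => c ⟨j.1, hsub j.2⟩) := by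
          intro b
          rw [funext_iff]
          exact ⟨fun H j => (H j).symm, fun H j => (H j).symm⟩
        simp_rw [hiff]
        rw [Finset.sum_ite_eq' Finset.univ (fun j : ↥Δ => c ⟨j.1, hsub j.2⟩)
          (fun b => G (fill Δ b τ) * ∏ i : ↥Λ, pval β h k i.1 (c i) η)]
        rw [if_pos (Finset.mem_univ _)]
    _ = ∑ c : ↥Λ → Bool, G (fill Λ c τ) * ∏ i : ↥Λ, pval β h k i.1 (c i) η := by
        refine Finset.sum_congr rfl fun c _ => ?_
        congr 1
        refine hG _ _ (fun j hj => ?_)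
        simp [fill, hj, hsub hj]

lemma reversible_sum (β h R : ℝ) (k : Site d → ℝ) (hR : 0 < R)
    (hsym : ∀ i : Site d, k (-i) = k i)
    (hrange : ∀ i : Site d, R ^ 2 < (normSq i : ℝ) → k i = 0)
    {Δ Λ : Finset (Site d)} (hsub : Δ ⊆ Λ) (τ : Conf d)
    (f : Conf d × Conf d → ℝ)
    (hf : ∀ σ η σ' η' : Conf d,
      (∀ j ∈ Δ, σ j = σ' j) → (∀ j ∈ Δ, η j = η' j) → f (σ, η) = f (σ', η')) :
    (∑ a : ↥Λ → Bool, nu β h k Λ τ a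
        * ∑ b : ↥Δ → Bool, f (fill Δ b τ, fill Λ a τ)
            * ∏ j : ↥Δ, pval β h k j.1 (b j) (fill Λ a τ))
      = ∑ a : ↥Λ → Bool, nu β h k Λ τ a
        * ∑ b : ↥Δ → Bool, f (fill Λ a τ, fill Δ b τ)
            * ∏ j : ↥Δ, pval β h k j.1 (b j) (fill Λ a τ) := by
  have hPfin : ∀ a c : ↥Λ → Bool,
      (∏ i : ↥Λ, pval β h k i.1 (c i) (fill Λ a τ)) = Pfin β h k Λ τ c a := fun a c => rfl
  calc (∑ a : ↥Λ → Bool, nu β h k Λ τ a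
        * ∑ b : ↥Δ → Bool, f (fill Δ b τ, fill Λ a τ)
            * ∏ j : ↥Δ, pval β h k j.1 (b j) (fill Λ a τ))
      = ∑ a : ↥Λ → Bool, ∑ c : ↥Λ → Bool,
          (nu β h k Λ τ a * Pfin β h k Λ τ c a) * f (fill Λ c τ, fill Λ a τ) := by
        refine Finset.sum_congr rfl fun a _ => ?_
        rw [expand_inner β h k hsub τ (fill Λ a τ) (fun σ => f (σ, fill Λ a τ))
          (fun σ σ' hs => hf σ (fill Λ a τ) σ' (fill Λ a τ) hs (fun _ _ => rfl))]
        rw [Finset.mul_sum]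
        exact Finset.sum_congr rfl fun c _ => by rw [hPfin a c]; ring
    _ = ∑ a : ↥Λ → Bool, ∑ c : ↥Λ → Bool,
          (nu β h k Λ τ c * Pfin β h k Λ τ a c) * f (fill Λ c τ, fill Λ a τ) := by
        exact Finset.sum_congr rfl fun a _ => Finset.sum_congr rfl fun c _ => by
          rw [detailed_balance β h R k hR hsym hrange Λ τ a c]
    _ = ∑ c : ↥Λ → Bool, ∑ a : ↥Λ → Bool,
          (nu β h k Λ τ c * Pfin β h k Λ τ a c) * f (fill Λ c τ, fill Λ a τ) :=
        Finset.sum_comm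
    _ = ∑ a : ↥Λ → Bool, nu β h k Λ τ a
        * ∑ b : ↥Δ → Bool, f (fill Λ a τ, fill Δ b τ)
            * ∏ j : ↥Δ, pval β h k j.1 (b j) (fill Λ a τ) := by
        refine Finset.sum_congr rfl fun a _ => ?_
        rw [expand_inner β h k hsub τ (fill Λ a τ) (fun η => f (fill Λ a τ, η))
          (fun η η' hs => hf (fill Λ a τ) η (fill Λ a τ) η' (fun _ _ => rfl) hs)]
        rw [Finset.mul_sum]
        exact Finset.sum_congr rfl fun c _ => by rw [hPfin a c]; ring

end Aux

/-- Any weak limit point `μ` of the finite volume stationary measures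
`ν_Λ^τ` as `Λ ↑ ℤ^d` (along hypercubes) is reversible for the infinite volume PCA:
`∫∫ f(σ,η) P(dσ|η) μ(dη) = ∫∫ f(σ,η) P(dη|σ) μ(dσ)` for every `f` local in both
variables. -/
theorem stmt7 {d : ℕ} (hd : 0 < d) (β h R : ℝ) (hβ : 0 < β) (hR : 0 < R)
    (k : Site d → ℝ) (hsym : ∀ i : Site d, k (-i) = k i)
    (hrange : ∀ i : Site d, R ^ 2 < (normSq i : ℝ) → k i = 0)
    (τ : Conf d)
    (μ : Measure (Conf d)) [IsProbabilityMeasure μ]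
    (φ : ℕ → ℕ) (hφ : StrictMono φ)
    (hlim : ∀ f : Conf d → ℝ, LocalFun f →
      Tendsto (fun n => ∫ σ, f σ ∂(nuMeas β h k (boxCc (φ n)) τ)) atTop
        (nhds (∫ σ, f σ ∂μ)))
    (P : ProbabilityTheory.Kernel (Conf d) (Conf d)) [ProbabilityTheory.IsMarkovKernel P]
    (hP : IsPCAB β h k P) :
    ∀ f : Conf d × Conf d → ℝ,
      (∃ Δ : Finset (Site d), ∀ σ η σ' η' : Conf d,
        (∀ j ∈ Δ, σ j = σ' j) → (∀ j ∈ Δ, η j = η' j) → f (σ, η) = f (σ', η')) →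
      ∫ η, ∫ σ, f (σ, η) ∂(P η) ∂μ = ∫ σ, ∫ η, f (σ, η) ∂(P σ) ∂μ := by
  intro f hfloc
  obtain ⟨Δ, hf⟩ := hfloc
  classical
  -- the two "one-step integrated" local functions
  set g : Conf d → ℝ := fun η =>
    ∑ a : ↥Δ → Bool, f (fill Δ a τ, η) * ∏ j : ↥Δ, pval β h k j.1 (a j) η with hg_def
  set g' : Conf d → ℝ := fun σ =>
    ∑ b : ↥Δ → Bool, f (σ, fill Δ b τ) * ∏ j : ↥Δ, pval β h k j.1 (b j) σ with hg'_def
  set Δ' : Finset (Site d) := Δ ∪ Δ.biUnion (fun i => suppK R i) with hΔ'_def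
  have hsupp : ∀ i ∈ Δ, suppK R i ⊆ Δ' := fun i hi x hx =>
    Finset.mem_union_right _ (Finset.mem_biUnion.mpr ⟨i, hi, hx⟩)
  have hΔΔ' : Δ ⊆ Δ' := Finset.subset_union_left
  have hgloc : LocalFun g := by
    refine ⟨Δ', fun η η' hag => ?_⟩
    refine Finset.sum_congr rfl fun a _ => ?_
    rw [hf (fill Δ a τ) η (fill Δ a τ) η' (fun _ _ => rfl)
      (fun j hj => hag j (hΔΔ' hj))]
    congr 1
    exact Finset.prod_congr rfl fun j _ =>
      pval_local β h R k hR hrange j.1 (a j)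
        (fun x hx => hag x (hsupp j.1 j.2 hx))
  have hg'loc : LocalFun g' := by
    refine ⟨Δ', fun σ σ' hag => ?_⟩
    refine Finset.sum_congr rfl fun b _ => ?_
    rw [hf σ (fill Δ b τ) σ' (fill Δ b τ) (fun j hj => hag j (hΔΔ' hj))
      (fun _ _ => rfl)]
    congr 1
    exact Finset.prod_congr rfl fun j _ =>
      pval_local β h R k hR hrange j.1 (b j)
        (fun x hx => hag x (hsupp j.1 j.2 hx))
  have hg_eq : ∀ η, ∫ σ, f (σ, η) ∂(P η) = g η := fun η =>
    kernel_integral β h k P hP Δ τ (fun σ => f (σ, η))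
      (fun σ σ' hs => hf σ η σ' η hs (fun _ _ => rfl)) η
  have hg'_eq : ∀ σ, ∫ η, f (σ, η) ∂(P σ) = g' σ := fun σ =>
    kernel_integral β h k P hP Δ τ (fun η => f (σ, η))
      (fun η η' hs => hf σ η σ η' (fun _ _ => rfl) hs) σ
  have hLHS : ∫ η, ∫ σ, f (σ, η) ∂(P η) ∂μ = ∫ η, g η ∂μ :=
    integral_congr_ae (Filter.Eventually.of_forall hg_eq)
  have hRHS : ∫ σ, ∫ η, f (σ, η) ∂(P σ) ∂μ = ∫ σ, g' σ ∂μ :=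
    integral_congr_ae (Filter.Eventually.of_forall hg'_eq)
  rw [hLHS, hRHS]
  have h1 := hlim g hgloc
  have h2 := hlim g' hg'loc
  have hmain : ∀ Λ : Finset (Site d), Δ ⊆ Λ →
      ∫ x, g x ∂(nuMeas β h k Λ τ) = ∫ x, g' x ∂(nuMeas β h k Λ τ) := by
    intro Λ hsub
    rw [integral_nuMeas β h k Λ τ g (localFun_stronglyMeasurable hgloc),
      integral_nuMeas β h k Λ τ g' (localFun_stronglyMeasurable hg'loc)]
    exact reversible_sum β h R k hR hsym hrange hsub τ f hf
  have hbox : ∀ᶠ n in atTop, Δ ⊆ boxCc (φ n) := by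
    rw [Filter.eventually_atTop]
    refine ⟨Δ.sup (fun i => Finset.univ.sup fun t => (i t).natAbs), fun n hn => ?_⟩
    intro j hj
    simp only [boxCc, Fintype.mem_piFinset, Finset.mem_Icc]
    intro t
    have hle1 : (j t).natAbs ≤ Δ.sup (fun i => Finset.univ.sup fun t => (i t).natAbs) :=
      le_trans (Finset.le_sup (f := fun t => (j t).natAbs) (Finset.mem_univ t))
        (Finset.le_sup (f := fun i => Finset.univ.sup fun t => (i t).natAbs) hj)
    have hle2 : (j t).natAbs ≤ φ n := le_trans hle1 (le_trans hn hφ.le_apply)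
    refine abs_le.mp ?_
    rw [Int.abs_eq_natAbs]
    exact_mod_cast hle2
  have hev : (fun n => ∫ x, g' x ∂(nuMeas β h k (boxCc (φ n)) τ))
      =ᶠ[atTop] (fun n => ∫ x, g x ∂(nuMeas β h k (boxCc (φ n)) τ)) :=
    hbox.mono fun n hsub => (hmain _ hsub).symm
  exact tendsto_nhds_unique h1 (Filter.Tendsto.congr' hev h2)


end
end PCA
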